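/- Let s be a nonzero binary sequence that has period dividing some N > 0, and suppose its minimal zero polynomial is g = q₁^{δ₁} · q₂^{δ₂} ⋯ q_t^{δ_t}, where q₁, …, q_t are pairwise distinct irreducible polynomials over F₂ and δ_i ≥ 1 for 1 ≤ i ≤ t. Then for any integers d₁, …, d_{t−1} with d_i ≥ δ_i for 1 ≤ i ≤ t−1, the sequence r := q₁(E)^{d₁} q₂(E)^{d₂} ⋯ q_{t−1}(E)^{d_{t−1}} q_t(E)^{δ_t − 1} s is nonzero and is generated by q_t, i.e., r ≠ 0 and q_t(E)r = 0. -/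

import Mathlib

open Polynomial

noncomputable def polyApp (f : Polynomial (ZMod 2)) (s : ℕ → ZMod 2) : ℕ → ZMod 2 :=
  fun i => f.sum fun j c => c * s (i + j)

def IsMinZeroPoly (g : Polynomial (ZMod 2)) (s : ℕ → ZMod 2) : Prop :=
  g ≠ 0 ∧ polyApp g s = 0 ∧
    ∀ h : Polynomial (ZMod 2), h ≠ 0 → polyApp h s = 0 → g.natDegree ≤ h.natDegree

noncomputable def shiftE : Module.End (ZMod 2) (ℕ → ZMod 2) where
  toFun s := fun i => s (i + 1)
  map_add' _ _ := rfl
  map_smul' _ _ := rfl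

lemma shiftE_pow (n : ℕ) (s : ℕ → ZMod 2) (i : ℕ) : (shiftE ^ n) s i = s (i + n) := by
  induction n generalizing s i with
  | zero => rfl
  | succ n ih =>
    rw [pow_succ, Module.End.mul_apply, ih]
    show s (i + n + 1) = _
    ring_nf

lemma polyApp_eq_aeval (f : Polynomial (ZMod 2)) (s : ℕ → ZMod 2) :
    polyApp f s = (aeval shiftE f) s := by
  induction f using Polynomial.induction_on' with
  | add p q hp hq =>
    funext i
    have h1 : polyApp (p + q) s i = polyApp p s i + polyApp q s i := by
      unfold polyApp
      rw [Polynomial.sum_add_index] <;> intros <;> simp [add_mul]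
    rw [h1, hp, hq, map_add]
    rfl
  | monomial n a =>
    funext i
    have h1 : polyApp (monomial n a) s i = a * s (i + n) := by
      unfold polyApp
      rw [Polynomial.sum_monomial_index]
      simp
    rw [h1, aeval_monomial]
    have h2 : ((algebraMap (ZMod 2) (Module.End (ZMod 2) (ℕ → ZMod 2))) a * shiftE ^ n) s
        = a • ((shiftE ^ n) s) := by
      rw [Module.End.mul_apply]
      simp [Module.algebraMap_end_apply]
    rw [h2]
    simp [shiftE_pow]

lemma polyApp_mul (f g : Polynomial (ZMod 2)) (s : ℕ → ZMod 2) :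
    polyApp (f * g) s = polyApp f (polyApp g s) := by
  rw [polyApp_eq_aeval, polyApp_eq_aeval, polyApp_eq_aeval, map_mul, Module.End.mul_apply]

lemma polyApp_zero_seq (f : Polynomial (ZMod 2)) : polyApp f 0 = 0 := by
  funext i
  simp [polyApp, Polynomial.sum]

lemma polyApp_eq_zero_of_dvd {g h : Polynomial (ZMod 2)} {s : ℕ → ZMod 2}
    (hdvd : g ∣ h) (hgz : polyApp g s = 0) : polyApp h s = 0 := by
  obtain ⟨c, rfl⟩ := hdvd
  rw [mul_comm, polyApp_mul, hgz, polyApp_zero_seq]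

lemma monic_of_ne_zero {p : Polynomial (ZMod 2)} (hp : p ≠ 0) : p.Monic := by
  have h1 : p.leadingCoeff ≠ 0 := leadingCoeff_ne_zero.mpr hp
  have h2 : ∀ a : ZMod 2, a ≠ 0 → a = 1 := by decide
  exact h2 _ h1

lemma min_dvd {g : Polynomial (ZMod 2)} {s : ℕ → ZMod 2} (hmin : IsMinZeroPoly g s)
    {h : Polynomial (ZMod 2)} (hh : polyApp h s = 0) : g ∣ h := by
  obtain ⟨hg0, hgz, hminle⟩ := hmin
  have hmonic : g.Monic := monic_of_ne_zero hg0
  rw [← Polynomial.modByMonic_eq_zero_iff_dvd hmonic]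
  by_contra hrem
  have heq : h %ₘ g = h - g * (h /ₘ g) :=
    eq_sub_of_add_eq (Polynomial.modByMonic_add_div h g)
  have hremz : polyApp (h %ₘ g) s = 0 := by
    rw [heq, polyApp_eq_aeval, map_sub, LinearMap.sub_apply,
      ← polyApp_eq_aeval, ← polyApp_eq_aeval, hh, mul_comm, polyApp_mul, hgz,
      polyApp_zero_seq, sub_zero]
  have h1 : g.natDegree ≤ (h %ₘ g).natDegree := hminle _ hrem hremz
  have h2 : (h %ₘ g).degree < g.degree := Polynomial.degree_modByMonic_lt h hmonic
  have h3 : (h %ₘ g).natDegree < g.natDegree := Polynomial.natDegree_lt_natDegree hrem h2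
  omega

lemma eq_of_dvd_irreducible {p r : Polynomial (ZMod 2)} (hp : Irreducible p)
    (hr : Irreducible r) (hdvd : p ∣ r) : p = r := by
  have hass : Associated p r := hp.associated_of_dvd hr hdvd
  exact Polynomial.eq_of_monic_of_associated (monic_of_ne_zero hp.ne_zero)
    (monic_of_ne_zero hr.ne_zero) hass

theorem raise_exponents_of_min_zero_poly
    (s : ℕ → ZMod 2) (hs : s ≠ 0)
    (N : ℕ) (hN : 0 < N) (hper : ∀ i, s (i + N) = s i)
    (t : ℕ) (q : Fin (t + 1) → Polynomial (ZMod 2)) (δ : Fin (t + 1) → ℕ)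
    (hirr : ∀ i, Irreducible (q i))
    (hdist : ∀ i j, i ≠ j → q i ≠ q j)
    (hδ : ∀ i, 1 ≤ δ i)
    (hmin : IsMinZeroPoly (∏ i, q i ^ δ i) s)
    (d : Fin (t + 1) → ℕ) (hd : ∀ i, i ≠ Fin.last t → δ i ≤ d i)
    (r : ℕ → ZMod 2)
    (hr : r = polyApp ((∏ i ∈ Finset.univ.erase (Fin.last t), q i ^ d i) *
                        q (Fin.last t) ^ (δ (Fin.last t) - 1)) s) :
    r ≠ 0 ∧ polyApp (q (Fin.last t)) r = 0 := by
  set L := Fin.last t with hL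
  set g : Polynomial (ZMod 2) := ∏ i, q i ^ δ i with hg
  set F : Polynomial (ZMod 2) := ∏ i ∈ Finset.univ.erase L, q i ^ d i with hF
  have hgz : polyApp g s = 0 := hmin.2.1
  have hg_fact : (∏ i ∈ Finset.univ.erase L, q i ^ δ i) * q L ^ δ L = g :=
    Finset.prod_erase_mul _ _ (Finset.mem_univ L)
  have hFdvd : (∏ i ∈ Finset.univ.erase L, q i ^ δ i) ∣ F := by
    apply Finset.prod_dvd_prod_of_dvd
    intro i hi
    exact pow_dvd_pow _ (hd i (Finset.mem_erase.mp hi).1)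
  have hcop : IsCoprime (q L) F := by
    apply IsCoprime.prod_right
    intro i hi
    have hne : i ≠ L := (Finset.mem_erase.mp hi).1
    have hndvd : ¬ q L ∣ q i := by
      intro hdvd
      exact hdist L i (fun h => hne h.symm) (eq_of_dvd_irreducible (hirr L) (hirr i) hdvd)
    exact ((hirr L).coprime_iff_not_dvd.mpr hndvd).pow_right
  have hpow : q L * q L ^ (δ L - 1) = q L ^ δ L := by
    have h1 := hδ L
    conv_rhs => rw [show δ L = (δ L - 1) + 1 by omega]
    rw [pow_succ]
    ring
  constructor
  · intro hr0
    rw [hr0] at hr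
    have hdvd : g ∣ F * q L ^ (δ L - 1) := min_dvd hmin hr.symm
    have hdvd2 : q L ^ δ L ∣ F * q L ^ (δ L - 1) := by
      refine dvd_trans ?_ hdvd
      rw [← hg_fact]
      exact dvd_mul_left _ _
    have hcop2 : IsCoprime (q L ^ δ L) F := hcop.pow_left
    have hdvd3 : q L ^ δ L ∣ q L ^ (δ L - 1) := hcop2.dvd_of_dvd_mul_left hdvd2
    have hle : δ L ≤ δ L - 1 :=
      (pow_dvd_pow_iff (hirr L).ne_zero (hirr L).not_isUnit).mp hdvd3
    have := hδ L
    omega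
  · rw [hr, ← polyApp_mul]
    apply polyApp_eq_zero_of_dvd _ hgz
    have : q L * (F * q L ^ (δ L - 1)) = F * q L ^ δ L := by
      rw [← hpow]; ring
    rw [this, ← hg_fact]
    exact mul_dvd_mul hFdvd dvd_rfl
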